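/- Conversely, with D, D' as above (jointly Gaussian, Cov(D_{ji}, D'_{j'i'}) = Σ̄_{jj'} independent of columns), if some column ℓ of a k×m matrix C̄ has nonzero column sum s ≠ 0 and Σ̄_{jj} > 0 for some j, then Cov((D C̄)_{jℓ}, (D' C̄)_{jℓ}) = s² Σ̄_{jj} > 0, so vec(D C̄) and vec(D' C̄) are not independent. -/

import Mathlib

open MeasureTheory ProbabilityTheory

/-- Matrices inherit the product measurable structure of functions. -/
instance matrixMeasurableSpace {d k : ℕ} : MeasurableSpace (Matrix (Fin d) (Fin k) ℝ) :=
  inferInstanceAs (MeasurableSpace ((Fin d) → (Fin k) → ℝ))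

/-- Necessity of the contrast condition: with `D, D'` jointly Gaussian mean-zero with
column-independent cross-covariance `Σ̄`, if some column `ℓ` of `C̄` has nonzero sum `s` and
`Σ̄_{jj} > 0`, then `Cov((DC̄)_{jℓ}, (D'C̄)_{jℓ}) = s² Σ̄_{jj} > 0`, so `vec(D C̄)` and
`vec(D' C̄)` are not independent. -/
theorem contrast_necessary_for_independence
    {Ω : Type*} [MeasurableSpace Ω] (μ : Measure Ω) [IsProbabilityMeasure μ]
    {d k m : ℕ}
    (D D' : Ω → Matrix (Fin d) (Fin k) ℝ)
    (hD : Measurable D) (hD' : Measurable D')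
    (hGauss : ∀ L : (Matrix (Fin d) (Fin k) ℝ × Matrix (Fin d) (Fin k) ℝ) →ₗ[ℝ] ℝ,
      ∃ (mLaw : ℝ) (v : NNReal),
        μ.map (fun ω => L (D ω, D' ω)) = gaussianReal mLaw v)
    (hmean : ∀ j i, (∫ ω, D ω j i ∂μ) = 0 ∧ (∫ ω, D' ω j i ∂μ) = 0)
    (hint : ∀ j i j' i', Integrable (fun ω => D ω j i * D' ω j' i') μ)
    (hint2 : ∀ j i j' i', Integrable (fun ω => D ω j i * D ω j' i') μ)
    (hint3 : ∀ j i j' i', Integrable (fun ω => D' ω j i * D' ω j' i') μ)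
    (Sbar : Matrix (Fin d) (Fin d) ℝ)
    (hcov : ∀ (j j' : Fin d) (i i' : Fin k),
      (∫ ω, D ω j i * D' ω j' i' ∂μ) = Sbar j j')
    (Cbar : Matrix (Fin k) (Fin m) ℝ)
    (ℓ : Fin m) (s : ℝ) (hs : s = ∑ i : Fin k, Cbar i ℓ) (hs0 : s ≠ 0)
    (j : Fin d) (hSjj : 0 < Sbar j j) :
    (∫ ω, (D ω * Cbar) j ℓ * (D' ω * Cbar) j ℓ ∂μ) = s ^ 2 * Sbar j j ∧
      0 < s ^ 2 * Sbar j j ∧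
      ¬ IndepFun (fun ω => D ω * Cbar) (fun ω => D' ω * Cbar) μ := by
  -- coordinate measurability
  have hmD : ∀ i : Fin k, Measurable (fun ω => D ω j i) := by
    intro i
    have h1 : Measurable fun ω => D ω j := (measurable_pi_apply j).comp hD
    exact (measurable_pi_apply i).comp h1
  have hmD' : ∀ i : Fin k, Measurable (fun ω => D' ω j i) := by
    intro i
    have h1 : Measurable fun ω => D' ω j := (measurable_pi_apply j).comp hD'
    exact (measurable_pi_apply i).comp h1
  -- L¹ from L²
  have hiD : ∀ i : Fin k, Integrable (fun ω => D ω j i) μ := by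
    intro i
    have h2 : Integrable (fun ω => (D ω j i) ^ 2) μ := by
      simpa [pow_two] using hint2 j i j i
    exact ((memLp_two_iff_integrable_sq (hmD i).aestronglyMeasurable).2 h2).integrable
      (by norm_num)
  have hiD' : ∀ i : Fin k, Integrable (fun ω => D' ω j i) μ := by
    intro i
    have h2 : Integrable (fun ω => (D' ω j i) ^ 2) μ := by
      simpa [pow_two] using hint3 j i j i
    exact ((memLp_two_iff_integrable_sq (hmD' i).aestronglyMeasurable).2 h2).integrable
      (by norm_num)
  -- expand the product
  have hexp : ∀ ω, (D ω * Cbar) j ℓ * (D' ω * Cbar) j ℓ =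
      ∑ i : Fin k, ∑ i' : Fin k, (D ω j i * D' ω j i') * (Cbar i ℓ * Cbar i' ℓ) := by
    intro ω
    simp only [Matrix.mul_apply, Finset.sum_mul_sum]
    refine Finset.sum_congr rfl fun i _ => Finset.sum_congr rfl fun i' _ => by ring
  have hintterm : ∀ i i' : Fin k,
      Integrable (fun ω => (D ω j i * D' ω j i') * (Cbar i ℓ * Cbar i' ℓ)) μ :=
    fun i i' => (hint j i j i').mul_const _
  have hI : (∫ ω, (D ω * Cbar) j ℓ * (D' ω * Cbar) j ℓ ∂μ) = s ^ 2 * Sbar j j := by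
    calc (∫ ω, (D ω * Cbar) j ℓ * (D' ω * Cbar) j ℓ ∂μ)
        = ∫ ω, ∑ i : Fin k, ∑ i' : Fin k,
            (D ω j i * D' ω j i') * (Cbar i ℓ * Cbar i' ℓ) ∂μ := by
          simp_rw [hexp]
      _ = ∑ i : Fin k, ∑ i' : Fin k,
            ∫ ω, (D ω j i * D' ω j i') * (Cbar i ℓ * Cbar i' ℓ) ∂μ := by
          rw [integral_finset_sum _ fun i _ => integrable_finset_sum _ fun i' _ => hintterm i i']
          exact Finset.sum_congr rfl fun i _ =>
            integral_finset_sum _ fun i' _ => hintterm i i'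
      _ = ∑ i : Fin k, ∑ i' : Fin k, Sbar j j * (Cbar i ℓ * Cbar i' ℓ) := by
          refine Finset.sum_congr rfl fun i _ => Finset.sum_congr rfl fun i' _ => ?_
          rw [integral_mul_const, hcov j j i i', mul_comm]
      _ = s ^ 2 * Sbar j j := by
          have : ∑ i : Fin k, ∑ i' : Fin k, Sbar j j * (Cbar i ℓ * Cbar i' ℓ)
              = Sbar j j * ((∑ i : Fin k, Cbar i ℓ) * (∑ i' : Fin k, Cbar i' ℓ)) := by
            rw [Finset.sum_mul_sum]
            simp [Finset.mul_sum]
          rw [this, ← hs]; ring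
  refine ⟨hI, by positivity, ?_⟩
  intro hind
  have hf : Measurable (fun M : Matrix (Fin d) (Fin m) ℝ => M j ℓ) := by
    have h1 : Measurable fun M : Matrix (Fin d) (Fin m) ℝ => M j := measurable_pi_apply j
    exact (measurable_pi_apply ℓ).comp h1
  have hind2 : IndepFun ((fun M : Matrix (Fin d) (Fin m) ℝ => M j ℓ) ∘ (fun ω => D ω * Cbar))
      ((fun M : Matrix (Fin d) (Fin m) ℝ => M j ℓ) ∘ (fun ω => D' ω * Cbar)) μ :=
    ProbabilityTheory.IndepFun.comp hind hf hf
  have hXeq : (fun ω => (D ω * Cbar) j ℓ) = fun ω => ∑ i : Fin k, D ω j i * Cbar i ℓ := by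
    funext ω; simp [Matrix.mul_apply]
  have hYeq : (fun ω => (D' ω * Cbar) j ℓ) = fun ω => ∑ i : Fin k, D' ω j i * Cbar i ℓ := by
    funext ω; simp [Matrix.mul_apply]
  have hiX : Integrable (fun ω => (D ω * Cbar) j ℓ) μ := by
    rw [hXeq]; exact integrable_finset_sum _ fun i _ => (hiD i).mul_const _
  have hiY : Integrable (fun ω => (D' ω * Cbar) j ℓ) μ := by
    rw [hYeq]; exact integrable_finset_sum _ fun i _ => (hiD' i).mul_const _
  have hEX : (∫ ω, (D ω * Cbar) j ℓ ∂μ) = 0 := by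
    rw [hXeq, integral_finset_sum _ fun i _ => (hiD i).mul_const _]
    refine Finset.sum_eq_zero fun i _ => ?_
    rw [integral_mul_const, (hmean j i).1, zero_mul]
  have hmul := hind2.integral_mul_eq_mul_integral hiX.aestronglyMeasurable hiY.aestronglyMeasurable
  have : (∫ ω, (D ω * Cbar) j ℓ * (D' ω * Cbar) j ℓ ∂μ) = 0 := by
    have hmul' : (∫ ω, (D ω * Cbar) j ℓ * (D' ω * Cbar) j ℓ ∂μ)
        = (∫ ω, (D ω * Cbar) j ℓ ∂μ) * (∫ ω, (D' ω * Cbar) j ℓ ∂μ) := hmul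
    rw [hmul', hEX, zero_mul]
  rw [hI] at this
  have : (0:ℝ) < 0 := by
    calc (0:ℝ) < s ^ 2 * Sbar j j := by positivity
    _ = 0 := this
  exact lt_irrefl 0 this
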